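/- arXiv:1507.00932 — 2 statements merged into one kernel-verified Lean document; each statement's English description precedes it below -/
import Mathlib

section
/- For every t ∈ (−1,1) and every x ∈ (0,1), the function c_t is differentiable at x and its derivative satisfies 1 − |P′(x)| ≤ (c_t)′(x) ≤ 1 + |P′(x)|, where P′(x) = (1 − 2x)/2; in particular (c_t)′(x) ≥ 1/2 > 0, so c_t is strictly increasing on (0,1). -/
/-- The polynomial `P(x) = (x - x^2)/2` from the paper's appendix. -/
noncomputable def P (x : ℝ) : ℝ := (x - x ^ 2) / 2

/-- `φ(t,x) = P(x)·t / ((1 - P(x))·t + P(x))`, intended for `t ≥ 0`. -/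
noncomputable def φ (t x : ℝ) : ℝ := P x * t / ((1 - P x) * t + P x)

/-- The path of maps `c_t(x) = x + φ(t,x)` for `t ≥ 0`, `x - φ(-t,x)` for `t < 0`. -/
noncomputable def c (t x : ℝ) : ℝ := if 0 ≤ t then x + φ t x else x - φ (-t) x

lemma hasDerivAt_P (x : ℝ) : HasDerivAt P ((1 - 2 * x) / 2) x := by
  have h : HasDerivAt (fun y : ℝ => (y - y ^ 2) / 2) ((1 - 2 * x) / 2) x := by
    have := ((hasDerivAt_id x).sub (hasDerivAt_pow 2 x)).div_const 2
    simpa using this.congr_deriv (by ring)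
  exact h

lemma P_pos {x : ℝ} (hx : x ∈ Set.Ioo (0:ℝ) 1) : 0 < P x := by
  obtain ⟨h0, h1⟩ := hx
  have : 0 < x * (1 - x) := mul_pos h0 (by linarith)
  unfold P; nlinarith

lemma P_lt_one {x : ℝ} (hx : x ∈ Set.Ioo (0:ℝ) 1) : P x < 1 := by
  obtain ⟨h0, h1⟩ := hx
  unfold P; nlinarith

lemma key {s x : ℝ} (hs0 : 0 ≤ s) (hs1 : s < 1) (hx : x ∈ Set.Ioo (0:ℝ) 1) :
    HasDerivAt (fun y => φ s y)
      ((1 - 2 * x) / 2 * s ^ 2 / ((1 - P x) * s + P x) ^ 2) x := by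
  have hP := P_pos hx
  have hP1 := P_lt_one hx
  have hD : 0 < (1 - P x) * s + P x := by nlinarith
  have hN : HasDerivAt (fun y => P y * s) ((1 - 2 * x) / 2 * s) x :=
    (hasDerivAt_P x).mul_const s
  have hDen : HasDerivAt (fun y => (1 - P y) * s + P y)
      ((1 - 2 * x) / 2 * (1 - s)) x := by
    have := (((hasDerivAt_const x (1:ℝ)).sub (hasDerivAt_P x)).mul_const s).add
      (hasDerivAt_P x)
    exact this.congr_deriv (by ring)
  have h := hN.div hDen hD.ne'
  refine h.congr_deriv ?_
  field_simp
  ring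

lemma main_d {t x : ℝ} (ht : t ∈ Set.Ioo (-1:ℝ) 1) (hx : x ∈ Set.Ioo (0:ℝ) 1) :
    ∃ d, HasDerivAt (c t) d x ∧ |d - 1| ≤ |(1 - 2 * x) / 2| := by
  have hP := P_pos hx
  have hP1 := P_lt_one hx
  have bound : ∀ s : ℝ, 0 ≤ s → s < 1 →
      |(1 - 2 * x) / 2 * s ^ 2 / ((1 - P x) * s + P x) ^ 2| ≤ |(1 - 2 * x) / 2| := by
    intro s hs0 hs1
    set D := (1 - P x) * s + P x with hDdef
    have hD : 0 < D := by nlinarith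
    have hsD : s ≤ D := by nlinarith
    have hratio : s ^ 2 / D ^ 2 ≤ 1 := by
      rw [div_le_one (by positivity)]; nlinarith
    have h0 : 0 ≤ s ^ 2 / D ^ 2 := by positivity
    calc |(1 - 2 * x) / 2 * s ^ 2 / D ^ 2|
        = |(1 - 2 * x) / 2| * (s ^ 2 / D ^ 2) := by
          rw [mul_div_assoc, abs_mul, abs_of_nonneg h0]
      _ ≤ |(1 - 2 * x) / 2| * 1 :=
          mul_le_mul_of_nonneg_left hratio (abs_nonneg _)
      _ = |(1 - 2 * x) / 2| := mul_one _
  rcases le_or_gt 0 t with h0t | h0t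
  · have hc : c t = fun y => y + φ t y := funext fun y => if_pos h0t
    refine ⟨1 + (1 - 2 * x) / 2 * t ^ 2 / ((1 - P x) * t + P x) ^ 2, ?_, ?_⟩
    · rw [hc]; exact (hasDerivAt_id x).add (key h0t ht.2 hx)
    · simpa using bound t h0t ht.2
  · have hc : c t = fun y => y - φ (-t) y := funext fun y => if_neg (not_le.mpr h0t)
    refine ⟨1 - (1 - 2 * x) / 2 * (-t) ^ 2 / ((1 - P x) * (-t) + P x) ^ 2, ?_, ?_⟩
    · rw [hc]; exact (hasDerivAt_id x).sub (key (by linarith) (by linarith [ht.1]) hx)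
    · rw [show (1 - (1 - 2 * x) / 2 * (-t) ^ 2 / ((1 - P x) * (-t) + P x) ^ 2) - 1
          = -((1 - 2 * x) / 2 * (-t) ^ 2 / ((1 - P x) * (-t) + P x) ^ 2) by ring,
        abs_neg]
      exact bound (-t) (by linarith) (by linarith [ht.1])

lemma abs_half {x : ℝ} (hx : x ∈ Set.Ioo (0:ℝ) 1) : |(1 - 2 * x) / 2| ≤ 1 / 2 := by
  obtain ⟨h0, h1⟩ := hx
  rw [abs_le]; constructor <;> linarith

theorem stmt_4 :
    (∀ t ∈ Set.Ioo (-1 : ℝ) 1, ∀ x ∈ Set.Ioo (0 : ℝ) 1,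
      DifferentiableAt ℝ (c t) x ∧
      1 - |(1 - 2 * x) / 2| ≤ deriv (c t) x ∧
      deriv (c t) x ≤ 1 + |(1 - 2 * x) / 2| ∧
      (1 : ℝ) / 2 ≤ deriv (c t) x ∧ (0 : ℝ) < deriv (c t) x) ∧
    (∀ t ∈ Set.Ioo (-1 : ℝ) 1, StrictMonoOn (c t) (Set.Ioo (0 : ℝ) 1)) := by
  have main : ∀ t ∈ Set.Ioo (-1 : ℝ) 1, ∀ x ∈ Set.Ioo (0 : ℝ) 1,
      DifferentiableAt ℝ (c t) x ∧
      1 - |(1 - 2 * x) / 2| ≤ deriv (c t) x ∧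
      deriv (c t) x ≤ 1 + |(1 - 2 * x) / 2| ∧
      (1 : ℝ) / 2 ≤ deriv (c t) x ∧ (0 : ℝ) < deriv (c t) x := by
    intro t ht x hx
    obtain ⟨d, hd, hbd⟩ := main_d ht hx
    have hderiv : deriv (c t) x = d := hd.deriv
    obtain ⟨hl, hu⟩ := abs_le.mp hbd
    have hhalf := abs_half hx
    refine ⟨hd.differentiableAt, ?_, ?_, ?_, ?_⟩ <;> rw [hderiv] <;> linarith
  refine ⟨main, fun t ht => ?_⟩
  apply strictMonoOn_of_deriv_pos (convex_Ioo 0 1)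
  · intro x hx
    exact ((main t ht x hx).1.continuousAt).continuousWithinAt
  · intro x hx
    rw [interior_Ioo] at hx
    exact (main t ht x hx).2.2.2.2
end

section
/- For every t ∈ (−1,1), the map c_t is a strictly increasing continuous bijection of (0,1) onto (0,1), differentiable on (0,1) with derivative bounded between 1/2 and 3/2, and satisfies c_t(x) → 0 as x → 0⁺ and c_t(x) → 1 as x → 1⁻. In other words, c_t belongs to the group D of diffeomorphisms of (0,1). -/
/-- The group `D` of diffeomorphisms of `(0,1)`: maps of `(0,1)` into `(0,1)`,
differentiable on `(0,1)`, with derivative bounded below by a positive constant and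
bounded above, tending to `0` at `0⁺` and to `1` at `1⁻`. -/
def D : Set (ℝ → ℝ) :=
  {f | Set.MapsTo f (Set.Ioo (0 : ℝ) 1) (Set.Ioo (0 : ℝ) 1) ∧
    (∀ x ∈ Set.Ioo (0 : ℝ) 1, DifferentiableAt ℝ f x) ∧
    (∃ m > (0 : ℝ), ∀ x ∈ Set.Ioo (0 : ℝ) 1, m ≤ deriv f x) ∧
    (∃ M : ℝ, ∀ x ∈ Set.Ioo (0 : ℝ) 1, deriv f x ≤ M) ∧
    Filter.Tendsto f (nhdsWithin 0 (Set.Ioi 0)) (nhds 0) ∧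
    Filter.Tendsto f (nhdsWithin 1 (Set.Iio 1)) (nhds 1)}


lemma Dn_pos {s x : ℝ} (hs0 : 0 ≤ s) (hs1 : s < 1) (hx : x ∈ Set.Ioo (0:ℝ) 1) :
    0 < (1 - P x) * s + P x := by
  nlinarith [P_pos hx, mul_pos (P_pos hx) (sub_pos.mpr hs1)]

lemma phi_nonneg {s x : ℝ} (hs0 : 0 ≤ s) (hs1 : s < 1) (hx : x ∈ Set.Ioo (0:ℝ) 1) :
    0 ≤ φ s x :=
  div_nonneg (mul_nonneg (P_pos hx).le hs0) (Dn_pos hs0 hs1 hx).le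

lemma phi_lt_x {s x : ℝ} (hs0 : 0 ≤ s) (hs1 : s < 1) (hx : x ∈ Set.Ioo (0:ℝ) 1) :
    φ s x < x := by
  rw [φ, div_lt_iff₀ (Dn_pos hs0 hs1 hx)]
  unfold P
  nlinarith [hx.1, hx.2, mul_pos hx.1 (sub_pos.mpr hx.2), sq_nonneg x, mul_nonneg hs0 hx.1.le]

lemma phi_lt_one_sub {s x : ℝ} (hs0 : 0 ≤ s) (hs1 : s < 1) (hx : x ∈ Set.Ioo (0:ℝ) 1) :
    φ s x < 1 - x := by
  rw [φ, div_lt_iff₀ (Dn_pos hs0 hs1 hx)]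
  unfold P
  nlinarith [hx.1, hx.2, mul_pos hx.1 (sub_pos.mpr hx.2), sq_nonneg (1-x),
    mul_nonneg hs0 (sub_pos.mpr hx.2).le]

lemma P_hasDeriv (x : ℝ) : HasDerivAt P ((1 - 2*x)/2) x := by
  have h : HasDerivAt (fun y : ℝ => (y - y ^ 2) / 2) ((1 - 2*x)/2) x := by
    have := ((hasDerivAt_id x).sub (hasDerivAt_pow 2 x)).div_const 2
    refine this.congr_deriv ?_
    simp
  exact h

lemma phi_hasDeriv {s x : ℝ} (hs0 : 0 ≤ s) (hs1 : s < 1) (hx : x ∈ Set.Ioo (0:ℝ) 1) :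
    HasDerivAt (φ s) ((1 - 2*x)/2 * s^2 / ((1 - P x) * s + P x)^2) x := by
  have hDn := Dn_pos hs0 hs1 hx
  have hP := P_hasDeriv x
  have hN : HasDerivAt (fun y => P y * s) ((1 - 2*x)/2 * s) x := hP.mul_const s
  have hD : HasDerivAt (fun y => (1 - P y) * s + P y)
      ((0-((1 - 2*x)/2)) * s + (1 - 2*x)/2) x :=
    (((hasDerivAt_const x (1:ℝ)).sub hP).mul_const s).add hP
  have := hN.div hD hDn.ne'
  refine this.congr_deriv ?_
  field_simp
  ring

lemma phi_deriv_bound {s x : ℝ} (hs0 : 0 ≤ s) (hs1 : s < 1) (hx : x ∈ Set.Ioo (0:ℝ) 1) :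
    -(1/2) ≤ (1 - 2*x)/2 * s^2 / ((1 - P x) * s + P x)^2 ∧
    (1 - 2*x)/2 * s^2 / ((1 - P x) * s + P x)^2 ≤ 1/2 := by
  have hDn := Dn_pos hs0 hs1 hx
  have hDn2 : (0:ℝ) < ((1 - P x) * s + P x)^2 := by positivity
  have hsD : s^2 ≤ ((1 - P x) * s + P x)^2 := by
    nlinarith [P_pos hx, mul_pos (P_pos hx) (sub_pos.mpr hs1)]
  constructor
  · rw [le_div_iff₀ hDn2]
    nlinarith [sq_nonneg s, hx.1, hx.2, hsD]
  · rw [div_le_iff₀ hDn2]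
    nlinarith [sq_nonneg s, hx.1, hx.2, hsD]

lemma P_cont : Continuous P := by unfold P; continuity

lemma phi_tendsto {s a : ℝ} (hs0 : 0 ≤ s) (ha : P a = 0) (l : Filter ℝ)
    (hl : l ≤ nhds a) : Filter.Tendsto (φ s) l (nhds 0) := by
  rcases eq_or_lt_of_le hs0 with h | h
  · have : φ s = fun _ => (0:ℝ) := by
      funext x; rw [φ, ← h]; simp
    rw [this]; exact tendsto_const_nhds
  · have hnum : Filter.Tendsto (fun x => P x * s) l (nhds 0) := by
      have := (P_cont.tendsto a).mono_left hl
      rw [ha] at this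
      simpa using this.mul_const s
    have hden : Filter.Tendsto (fun x => (1 - P x) * s + P x) l (nhds s) := by
      have := (P_cont.tendsto a).mono_left hl
      rw [ha] at this
      have h2 := (((tendsto_const_nhds (α := ℝ) (x := (1:ℝ)) (f := l)).sub this).mul_const s).add this
      simpa using h2
    have := hnum.div hden h.ne'
    simpa using (show Filter.Tendsto (φ s) l (nhds (0 / s)) from this)

lemma master (g : ℝ → ℝ)
    (hder : ∀ x ∈ Set.Ioo (0:ℝ) 1, ∃ d, HasDerivAt g d x ∧ 1/2 ≤ d ∧ d ≤ 3/2)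
    (hmaps : Set.MapsTo g (Set.Ioo 0 1) (Set.Ioo 0 1))
    (h0 : Filter.Tendsto g (nhdsWithin 0 (Set.Ioi 0)) (nhds 0))
    (h1 : Filter.Tendsto g (nhdsWithin 1 (Set.Iio 1)) (nhds 1)) :
    StrictMonoOn g (Set.Ioo (0:ℝ) 1) ∧
      ContinuousOn g (Set.Ioo (0:ℝ) 1) ∧
      Set.BijOn g (Set.Ioo (0:ℝ) 1) (Set.Ioo (0:ℝ) 1) ∧
      (∀ x ∈ Set.Ioo (0:ℝ) 1, DifferentiableAt ℝ g x ∧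
        (1 : ℝ) / 2 ≤ deriv g x ∧ deriv g x ≤ 3 / 2) ∧
      Filter.Tendsto g (nhdsWithin 0 (Set.Ioi 0)) (nhds 0) ∧
      Filter.Tendsto g (nhdsWithin 1 (Set.Iio 1)) (nhds 1) ∧
      g ∈ D := by
  have hd : ∀ x ∈ Set.Ioo (0:ℝ) 1, DifferentiableAt ℝ g x ∧
      (1 : ℝ) / 2 ≤ deriv g x ∧ deriv g x ≤ 3 / 2 := by
    intro x hx
    obtain ⟨d, hdd, hl, hu⟩ := hder x hx
    refine ⟨hdd.differentiableAt, ?_, ?_⟩ <;> rw [hdd.deriv] <;> assumption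
  have hcont : ContinuousOn g (Set.Ioo (0:ℝ) 1) := fun x hx =>
    ((hd x hx).1.continuousAt).continuousWithinAt
  have hmono : StrictMonoOn g (Set.Ioo (0:ℝ) 1) := by
    apply strictMonoOn_of_deriv_pos (convex_Ioo 0 1) hcont
    intro x hx
    rw [interior_Ioo] at hx
    linarith [(hd x hx).2.1]
  have hsurj : Set.SurjOn g (Set.Ioo (0:ℝ) 1) (Set.Ioo (0:ℝ) 1) := by
    intro y hy
    have ha : ∃ a, a ∈ Set.Ioo (0:ℝ) (1/2) ∧ g a < y := by
      have e1 : ∀ᶠ x in nhdsWithin (0:ℝ) (Set.Ioi 0), g x < y :=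
        h0 (Iio_mem_nhds hy.1)
      have e2 : Set.Ioo (0:ℝ) (1/2) ∈ nhdsWithin (0:ℝ) (Set.Ioi 0) :=
        Ioo_mem_nhdsGT_of_mem ⟨le_refl 0, by norm_num⟩
      obtain ⟨a, h2, h1'⟩ := (e1.and (Filter.eventually_of_mem e2 (fun x h => h))).exists
      exact ⟨a, h1', h2⟩
    have hb : ∃ b, b ∈ Set.Ioo (1/2:ℝ) 1 ∧ y < g b := by
      have e1 : ∀ᶠ x in nhdsWithin (1:ℝ) (Set.Iio 1), y < g x :=
        h1 (Ioi_mem_nhds hy.2)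
      have e2 : Set.Ioo (1/2:ℝ) 1 ∈ nhdsWithin (1:ℝ) (Set.Iio 1) :=
        Ioo_mem_nhdsLT_of_mem ⟨by norm_num, le_refl 1⟩
      obtain ⟨b, h2, h1'⟩ := (e1.and (Filter.eventually_of_mem e2 (fun x h => h))).exists
      exact ⟨b, h1', h2⟩
    obtain ⟨a, ha1, ha2⟩ := ha
    obtain ⟨b, hb1, hb2⟩ := hb
    have hab : a ≤ b := le_of_lt (lt_trans ha1.2 hb1.1)
    have hsub : Set.Icc a b ⊆ Set.Ioo (0:ℝ) 1 := fun z hz =>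
      ⟨lt_of_lt_of_le ha1.1 hz.1, lt_of_le_of_lt hz.2 hb1.2⟩
    obtain ⟨x, hx1, hx2⟩ := intermediate_value_Icc hab (hcont.mono hsub) ⟨ha2.le, hb2.le⟩
    exact ⟨x, hsub hx1, hx2⟩
  exact ⟨hmono, hcont, ⟨hmaps, hmono.injOn, hsurj⟩, hd, h0, h1,
    hmaps, fun x hx => (hd x hx).1,
    ⟨1/2, by norm_num, fun x hx => (hd x hx).2.1⟩,
    ⟨3/2, fun x hx => (hd x hx).2.2⟩, h0, h1⟩

lemma tendsto_id0 : Filter.Tendsto (fun x : ℝ => x) (nhdsWithin 0 (Set.Ioi 0)) (nhds 0) :=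
  Filter.tendsto_id.mono_left nhdsWithin_le_nhds

lemma tendsto_id1 : Filter.Tendsto (fun x : ℝ => x) (nhdsWithin 1 (Set.Iio 1)) (nhds 1) :=
  Filter.tendsto_id.mono_left nhdsWithin_le_nhds

theorem stmt_5 :
    ∀ t ∈ Set.Ioo (-1 : ℝ) 1,
      StrictMonoOn (c t) (Set.Ioo (0 : ℝ) 1) ∧
      ContinuousOn (c t) (Set.Ioo (0 : ℝ) 1) ∧
      Set.BijOn (c t) (Set.Ioo (0 : ℝ) 1) (Set.Ioo (0 : ℝ) 1) ∧
      (∀ x ∈ Set.Ioo (0 : ℝ) 1, DifferentiableAt ℝ (c t) x ∧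
        (1 : ℝ) / 2 ≤ deriv (c t) x ∧ deriv (c t) x ≤ 3 / 2) ∧
      Filter.Tendsto (c t) (nhdsWithin 0 (Set.Ioi 0)) (nhds 0) ∧
      Filter.Tendsto (c t) (nhdsWithin 1 (Set.Iio 1)) (nhds 1) ∧
      c t ∈ D := by
  intro t ht
  have hP0 : P 0 = 0 := by norm_num [P]
  have hP1 : P 1 = 0 := by norm_num [P]
  rcases le_or_gt 0 t with hpos | hneg
  · have hceq : c t = fun x => x + φ t x := funext fun x => if_pos hpos
    rw [hceq]
    refine master _ ?_ ?_ ?_ ?_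
    · intro x hx
      refine ⟨1 + (1 - 2*x)/2 * t^2 / ((1 - P x) * t + P x)^2,
        (hasDerivAt_id x).add (phi_hasDeriv hpos ht.2 hx), ?_, ?_⟩ <;>
        · obtain ⟨hl, hu⟩ := phi_deriv_bound hpos ht.2 hx; linarith
    · intro x hx
      have h1 := phi_nonneg hpos ht.2 hx
      have h2 := phi_lt_one_sub hpos ht.2 hx
      exact ⟨show (0:ℝ) < x + φ t x by linarith [hx.1], show x + φ t x < 1 by linarith⟩
    · have := tendsto_id0.add (phi_tendsto hpos hP0 _ nhdsWithin_le_nhds)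
      simpa using this
    · have := tendsto_id1.add (phi_tendsto hpos hP1 _ nhdsWithin_le_nhds)
      simpa using this
  · have hs0 : (0:ℝ) ≤ -t := by linarith
    have hs1 : -t < 1 := by linarith [ht.1]
    have hceq : c t = fun x => x - φ (-t) x := funext fun x => if_neg (not_le.mpr hneg)
    rw [hceq]
    refine master _ ?_ ?_ ?_ ?_
    · intro x hx
      refine ⟨1 - (1 - 2*x)/2 * (-t)^2 / ((1 - P x) * (-t) + P x)^2,
        (hasDerivAt_id x).sub (phi_hasDeriv hs0 hs1 hx), ?_, ?_⟩ <;>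
        · obtain ⟨hl, hu⟩ := phi_deriv_bound hs0 hs1 hx; linarith
    · intro x hx
      have h1 := phi_nonneg hs0 hs1 hx
      have h2 := phi_lt_x hs0 hs1 hx
      exact ⟨show (0:ℝ) < x - φ (-t) x by linarith, show x - φ (-t) x < 1 by linarith [hx.2]⟩
    · have := tendsto_id0.sub (phi_tendsto hs0 hP0 _ nhdsWithin_le_nhds)
      simpa using this
    · have := tendsto_id1.sub (phi_tendsto hs0 hP1 _ nhdsWithin_le_nhds)
      simpa using this
end
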